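/- Let Ω' ⊆ ℝ² be open and let λ : ℝ² → ℂ be continuously differentiable on Ω' with Im λ > 0 and λ_x + λ·λ_y = 0 on Ω'. Assume Φ ≠ 0 at every point of Ω' and that the canonical coordinate ξ is injective on Ω'. Then the map Ψ : Ω' → ℂ, Ψ(x,y) := ξ(x,y) = y − λ(x,y)·x, is an open map on Ω', its image ξ(Ω') is open in ℂ, Ψ is a homeomorphism from Ω' onto ξ(Ω'), and the inverse map ξ(Ω') → Ω' is continuously differentiable; that is, Ψ is a C¹ diffeomorphism from Ω' onto ξ(Ω'). -/

import Mathlib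

open Complex

noncomputable def pdx (f : ℝ × ℝ → ℂ) (p : ℝ × ℝ) : ℂ := fderiv ℝ f p (1, 0)
noncomputable def pdy (f : ℝ × ℝ → ℂ) (p : ℝ × ℝ) : ℂ := fderiv ℝ f p (0, 1)

/-- The canonical coordinate `ξ(x,y) = y − λ(x,y)·x`. -/
noncomputable def xiC (lam : ℝ × ℝ → ℂ) (p : ℝ × ℝ) : ℂ := (p.2 : ℂ) - lam p * (p.1 : ℂ)

/-- The characteristic Jacobian. -/
noncomputable def Phi (lam : ℝ × ℝ → ℂ) (p : ℝ × ℝ) : ℂ :=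
  (lam p - (starRingEnd ℂ) (lam p))
    - (p.1 : ℂ) * ((starRingEnd ℂ) (pdx lam p) + lam p * (starRingEnd ℂ) (pdy lam p))

noncomputable def fstC : (ℝ × ℝ) →L[ℝ] ℂ :=
  Complex.ofRealCLM.comp (ContinuousLinearMap.fst ℝ ℝ ℝ)
noncomputable def sndC : (ℝ × ℝ) →L[ℝ] ℂ :=
  Complex.ofRealCLM.comp (ContinuousLinearMap.snd ℝ ℝ ℝ)

lemma xiC_hasFDerivAt (lam : ℝ × ℝ → ℂ) (p : ℝ × ℝ) (hd : DifferentiableAt ℝ lam p) :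
    HasFDerivAt (xiC lam)
      (sndC - (lam p • fstC + (p.1 : ℂ) • fderiv ℝ lam p)) p := by
  have h1 : HasFDerivAt (fun q : ℝ × ℝ => (q.1 : ℂ)) fstC p := fstC.hasFDerivAt
  have h2 : HasFDerivAt (fun q : ℝ × ℝ => (q.2 : ℂ)) sndC p := sndC.hasFDerivAt
  have hmul := (hd.hasFDerivAt).mul h1
  exact h2.sub hmul

/-- At a point of `Ω'`, the derivative of `ξ` is an invertible linear map. -/
lemma key (lam : ℝ × ℝ → ℂ) (p : ℝ × ℝ)
    (hd : DifferentiableAt ℝ lam p)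
    (him : 0 < (lam p).im)
    (hrigid : pdx lam p + lam p * pdy lam p = 0)
    (hΦ : Phi lam p ≠ 0) :
    ∃ e : (ℝ × ℝ) ≃L[ℝ] ℂ, HasFDerivAt (xiC lam) (e : (ℝ × ℝ) →L[ℝ] ℂ) p := by
  set D := fderiv ℝ lam p with hD
  set L : (ℝ × ℝ) →L[ℝ] ℂ := sndC - (lam p • fstC + (p.1 : ℂ) • D) with hL
  have hF : HasFDerivAt (xiC lam) L p := xiC_hasFDerivAt lam p hd
  set x : ℂ := (p.1 : ℂ)
  set lp : ℂ := lam p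
  set lx : ℂ := pdx lam p
  set ly : ℂ := pdy lam p
  have hlx : lx = -(lp * ly) := by
    have := hrigid; linear_combination this
  -- B = ∂ξ/∂y
  set B : ℂ := 1 - x * ly with hBdef
  have hB : B ≠ 0 := by
    intro h0
    apply hΦ
    have hconj : (starRingEnd ℂ) lx + lp * (starRingEnd ℂ) ly
        = (lp - (starRingEnd ℂ) lp) * (starRingEnd ℂ) ly := by
      rw [hlx]; simp [map_mul]; ring
    have hcx : (starRingEnd ℂ) x = x := Complex.conj_ofReal p.1
    have hx : (starRingEnd ℂ) B = 1 - x * (starRingEnd ℂ) ly := by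
      rw [hBdef, map_sub, map_one, map_mul, hcx]
    have : Phi lam p = (lp - (starRingEnd ℂ) lp) * (starRingEnd ℂ) B := by
      rw [Phi, hconj, hx]; ring
    rw [this, h0, map_zero, mul_zero]
  -- evaluate L
  have hLz : ∀ z : ℝ × ℝ, L z = ((z.2 : ℂ) - lp * (z.1 : ℂ)) * B := by
    intro z
    have hz : (z.1, z.2) = z.1 • ((1:ℝ), (0:ℝ)) + z.2 • ((0:ℝ), (1:ℝ)) := by
      simp [Prod.ext_iff]
    have hDz : D z = (z.1 : ℂ) * lx + (z.2 : ℂ) * ly := by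
      conv_lhs => rw [show z = (z.1, z.2) from rfl, hz]
      rw [map_add, map_smul, map_smul]
      simp [lx, ly, pdx, pdy, hD, Complex.real_smul]
    have : L z = (z.2 : ℂ) - (lp * (z.1 : ℂ) + x * D z) := by
      simp only [hL, ContinuousLinearMap.sub_apply, ContinuousLinearMap.add_apply,
        ContinuousLinearMap.smul_apply, smul_eq_mul]
      simp [fstC, sndC]
    rw [this, hDz, hlx, hBdef]
    ring
  have hinj : Function.Injective (L : (ℝ × ℝ) →ₗ[ℝ] ℂ) := by
    rw [injective_iff_map_eq_zero]
    intro z hz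
    have hz' : ((z.2 : ℂ) - lp * (z.1 : ℂ)) * B = 0 := by
      rw [← hLz z]; exact hz
    have h1 : (z.2 : ℂ) - lp * (z.1 : ℂ) = 0 := by
      rcases mul_eq_zero.1 hz' with h | h
      · exact h
      · exact absurd h hB
    have h2 : z.1 = 0 := by
      have h := congrArg Complex.im h1
      simp [Complex.sub_im, Complex.mul_im] at h
      rcases h with h | h
      · exact absurd h him.ne'
      · exact h
    have h3 : z.2 = 0 := by
      have := h1
      rw [h2] at this
      simpa using this
    exact Prod.ext h2 h3
  have hdim : Module.finrank ℝ (ℝ × ℝ) = Module.finrank ℝ ℂ := by simp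
  let e : (ℝ × ℝ) ≃ₗ[ℝ] ℂ :=
    (L : (ℝ × ℝ) →ₗ[ℝ] ℂ).linearEquivOfInjective hinj hdim
  refine ⟨e.toContinuousLinearEquiv, ?_⟩
  have hcoe : ((e.toContinuousLinearEquiv : (ℝ × ℝ) →L[ℝ] ℂ) : (ℝ × ℝ) → ℂ) = L := by
    funext z
    show e.toContinuousLinearEquiv z = L z
    rw [LinearEquiv.coe_toContinuousLinearEquiv']
    exact LinearMap.linearEquivOfInjective_apply hinj hdim z
  have : (e.toContinuousLinearEquiv : (ℝ × ℝ) →L[ℝ] ℂ) = L :=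
    ContinuousLinearMap.ext fun z => congrFun hcoe z
  rw [this]
  exact hF

/-- Uniformizing coordinates: on an open set where `Φ ≠ 0` and the canonical
coordinate `ξ` is injective, `ξ` is an open map, a homeomorphism onto its open
image, with a `C¹` inverse. -/
theorem stmt15
    (Ω' : Set (ℝ × ℝ)) (hΩ' : IsOpen Ω')
    (lam : ℝ × ℝ → ℂ)
    (hlam : ContDiffOn ℝ 1 lam Ω')
    (him : ∀ p ∈ Ω', 0 < (lam p).im)
    (hrigid : ∀ p ∈ Ω', pdx lam p + lam p * pdy lam p = 0)
    (hΦ : ∀ p ∈ Ω', Phi lam p ≠ 0)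
    (hinj : Set.InjOn (xiC lam) Ω') :
    (∀ U : Set (ℝ × ℝ), IsOpen U → U ⊆ Ω' → IsOpen (xiC lam '' U)) ∧
    IsOpen (xiC lam '' Ω') ∧
    ContinuousOn (xiC lam) Ω' ∧
    ∃ Ψinv : ℂ → ℝ × ℝ,
      ContDiffOn ℝ 1 Ψinv (xiC lam '' Ω') ∧
      (∀ p ∈ Ω', Ψinv (xiC lam p) = p) ∧
      (∀ w ∈ xiC lam '' Ω', xiC lam (Ψinv w) = w) := by
  -- ξ is C¹ on Ω'
  have hxc : ContDiffOn ℝ 1 (xiC lam) Ω' := by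
    have h2 : ContDiff ℝ 1 (fun q : ℝ × ℝ => (q.2 : ℂ)) :=
      Complex.ofRealCLM.contDiff.comp contDiff_snd
    have h1 : ContDiff ℝ 1 (fun q : ℝ × ℝ => (q.1 : ℂ)) :=
      Complex.ofRealCLM.contDiff.comp contDiff_fst
    exact (h2.contDiffOn).sub (hlam.mul h1.contDiffOn)
  have hxa : ∀ p ∈ Ω', ContDiffAt ℝ 1 (xiC lam) p := fun p hp =>
    hxc.contDiffAt (hΩ'.mem_nhds hp)
  have hkey : ∀ p ∈ Ω', ∃ e : (ℝ × ℝ) ≃L[ℝ] ℂ,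
      HasFDerivAt (xiC lam) (e : (ℝ × ℝ) →L[ℝ] ℂ) p := by
    intro p hp
    exact key lam p ((hlam.contDiffAt (hΩ'.mem_nhds hp)).differentiableAt one_ne_zero)
      (him p hp) (hrigid p hp) (hΦ p hp)
  -- openness
  have hopen : ∀ U : Set (ℝ × ℝ), IsOpen U → U ⊆ Ω' → IsOpen (xiC lam '' U) := by
    intro U hU hUΩ
    rw [isOpen_iff_mem_nhds]
    rintro w ⟨p, hpU, rfl⟩
    obtain ⟨e, hF⟩ := hkey p (hUΩ hpU)
    set Ph := (hxa p (hUΩ hpU)).toOpenPartialHomeomorph (xiC lam) hF one_ne_zero with hPh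
    have hsrc : p ∈ Ph.source := (hxa p (hUΩ hpU)).mem_toOpenPartialHomeomorph_source hF one_ne_zero
    have hccoe : (Ph : (ℝ × ℝ) → ℂ) = xiC lam :=
      (hxa p (hUΩ hpU)).toOpenPartialHomeomorph_coe hF one_ne_zero
    have hio : IsOpen (Ph '' (U ∩ Ph.source)) :=
      Ph.isOpen_image_of_subset_source (hU.inter Ph.open_source) Set.inter_subset_right
    rw [hccoe] at hio
    have hmem : xiC lam p ∈ xiC lam '' (U ∩ Ph.source) := ⟨p, ⟨hpU, hsrc⟩, rfl⟩
    exact Filter.mem_of_superset (hio.mem_nhds hmem)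
      (Set.image_mono Set.inter_subset_left)
  have hopenΩ : IsOpen (xiC lam '' Ω') := hopen Ω' hΩ' le_rfl
  refine ⟨hopen, hopenΩ, hxc.continuousOn, ?_⟩
  classical
  set Ψinv : ℂ → ℝ × ℝ := Function.invFunOn (xiC lam) Ω' with hΨ
  have hleft : ∀ p ∈ Ω', Ψinv (xiC lam p) = p := fun p hp =>
    hinj.leftInvOn_invFunOn hp
  have hright : ∀ w ∈ xiC lam '' Ω', xiC lam (Ψinv w) = w := by
    rintro w ⟨p, hp, rfl⟩
    rw [hleft p hp]
  have hmemΩ : ∀ w ∈ xiC lam '' Ω', Ψinv w ∈ Ω' := by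
    rintro w ⟨p, hp, rfl⟩
    rw [hleft p hp]; exact hp
  refine ⟨Ψinv, ?_, hleft, hright⟩
  intro w hw
  obtain ⟨p, hp, rfl⟩ := hw
  obtain ⟨e, hF⟩ := hkey p hp
  have hs : HasStrictFDerivAt (xiC lam) (e : (ℝ × ℝ) →L[ℝ] ℂ) p :=
    (hxa p hp).hasStrictFDerivAt' hF one_ne_zero
  set g : ℂ → ℝ × ℝ := (hxa p hp).localInverse hF one_ne_zero with hg
  have hgC : ContDiffAt ℝ 1 g (xiC lam p) := (hxa p hp).to_localInverse hF one_ne_zero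
  have hgp : g (xiC lam p) = p := (hxa p hp).localInverse_apply_image hF one_ne_zero
  -- eventually, Ψinv = g near ξ p
  have hev1 : ∀ᶠ z in nhds (xiC lam p), xiC lam (g z) = z := hs.eventually_right_inverse
  have hev2 : ∀ᶠ z in nhds (xiC lam p), g z ∈ Ω' := by
    have : ContinuousAt g (xiC lam p) := hgC.continuousAt
    have := this.preimage_mem_nhds (hΩ'.mem_nhds (show g (xiC lam p) ∈ Ω' by rw [hgp]; exact hp))
    exact this
  have heq : ∀ᶠ z in nhds (xiC lam p), Ψinv z = g z := by
    filter_upwards [hev1, hev2] with z h1 h2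
    have hz : z ∈ xiC lam '' Ω' := ⟨g z, h2, h1⟩
    apply hinj (hmemΩ z hz) h2
    rw [hright z hz, h1]
  have : ContDiffAt ℝ 1 Ψinv (xiC lam p) := hgC.congr_of_eventuallyEq heq
  exact this.contDiffWithinAt
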